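/- Let Q(x₁,x₂) = a₃x₁² + b₃x₂² + c₃x₁x₂ be a real quadratic form with a₃ ≥ 1 and a₃b₃ ≠ 0, and let R ⊆ ℝ² be a bounded convex region contained in the square [−r_∞, r_∞]². Then for every α > 0, the area of {x ∈ R : |Q(x)| ≤ α} is O(r_∞ √α), with an absolute implied constant. -/

import Mathlib

open MeasureTheory

private lemma sqrt_sub_sqrt_le (u v : ℝ) (hu : 0 ≤ u) (huv : u ≤ v) :
    Real.sqrt v - Real.sqrt u ≤ Real.sqrt (v - u) := by
  have hsu := Real.sq_sqrt hu
  have hsd := Real.sq_sqrt (by linarith : (0:ℝ) ≤ v - u)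
  have h2 : Real.sqrt v ≤ Real.sqrt ((Real.sqrt u + Real.sqrt (v - u)) ^ 2) := by
    apply Real.sqrt_le_sqrt
    nlinarith [Real.sqrt_nonneg u, Real.sqrt_nonneg (v - u)]
  rw [Real.sqrt_sq (by positivity)] at h2
  linarith

private lemma core_bound (a t α : ℝ) (ha : 1 ≤ a) (hα : 0 < α) :
    volume {z : ℝ | |a * z ^ 2 - t| ≤ α} ≤ ENNReal.ofReal (4 * Real.sqrt α) := by
  have ha0 : 0 < a := lt_of_lt_of_le one_pos ha
  set u : ℝ := max (t - α) 0 with hu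
  set v : ℝ := max (t + α) 0 with hv
  have hu0 : 0 ≤ u := le_max_right _ _
  have huv : u ≤ v := max_le_max (by linarith) le_rfl
  have huva : u / a ≤ v / a := by gcongr
  have hsub : {z : ℝ | |a * z ^ 2 - t| ≤ α} ⊆
      Set.Icc (-(Real.sqrt (v / a))) (-(Real.sqrt (u / a))) ∪
      Set.Icc (Real.sqrt (u / a)) (Real.sqrt (v / a)) := by
    intro z hz
    rw [Set.mem_setOf_eq, abs_le] at hz
    have hz2 : 0 ≤ z ^ 2 := sq_nonneg z
    have h1 : u / a ≤ z ^ 2 := by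
      rw [div_le_iff₀ ha0]
      have : u ≤ a * z ^ 2 := max_le (by linarith [hz.1]) (by positivity)
      linarith
    have h2 : z ^ 2 ≤ v / a := by
      rw [le_div_iff₀ ha0]
      have : a * z ^ 2 ≤ v := le_max_of_le_left (by linarith [hz.2])
      linarith
    have hle : |z| ≤ Real.sqrt (v / a) := by
      rw [← Real.sqrt_sq_eq_abs]; exact Real.sqrt_le_sqrt h2
    have hge : Real.sqrt (u / a) ≤ |z| := by
      rw [← Real.sqrt_sq_eq_abs]; exact Real.sqrt_le_sqrt h1
    rcases le_or_gt 0 z with h | h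
    · right
      rw [abs_of_nonneg h] at hle hge
      exact ⟨hge, hle⟩
    · left
      rw [abs_of_neg h] at hle hge
      constructor <;> linarith
  have hd0 : Real.sqrt (u / a) ≤ Real.sqrt (v / a) := Real.sqrt_le_sqrt huva
  have hkey : Real.sqrt (v / a) - Real.sqrt (u / a) ≤ 2 * Real.sqrt α := by
    have h1 := sqrt_sub_sqrt_le (u / a) (v / a) (by positivity) huva
    have h2 : v / a - u / a ≤ 4 * α := by
      have hvu : v - u ≤ 2 * α := by
        apply sub_le_iff_le_add.mpr
        apply max_le (by linarith [le_max_left (t - α) 0]) (by linarith)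
      have : (v - u) / a ≤ v - u := div_le_self (by linarith) ha
      have : v / a - u / a = (v - u) / a := by ring
      linarith [div_le_self (show (0:ℝ) ≤ v - u by linarith) ha]
    have h3 : Real.sqrt (v / a - u / a) ≤ Real.sqrt (4 * α) := Real.sqrt_le_sqrt h2
    have h4 : Real.sqrt (4 * α) = 2 * Real.sqrt α := by
      rw [show (4:ℝ) * α = 2 ^ 2 * α by ring, Real.sqrt_mul (by positivity),
        Real.sqrt_sq (by norm_num)]
    linarith
  calc volume {z : ℝ | |a * z ^ 2 - t| ≤ α}
      ≤ volume (Set.Icc (-(Real.sqrt (v / a))) (-(Real.sqrt (u / a))) ∪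
          Set.Icc (Real.sqrt (u / a)) (Real.sqrt (v / a))) := measure_mono hsub
    _ ≤ volume (Set.Icc (-(Real.sqrt (v / a))) (-(Real.sqrt (u / a)))) +
          volume (Set.Icc (Real.sqrt (u / a)) (Real.sqrt (v / a))) := measure_union_le _ _
    _ = ENNReal.ofReal (Real.sqrt (v / a) - Real.sqrt (u / a)) +
          ENNReal.ofReal (Real.sqrt (v / a) - Real.sqrt (u / a)) := by
        rw [Real.volume_Icc, Real.volume_Icc]
        congr 1
        ring_nf
    _ = ENNReal.ofReal ((Real.sqrt (v / a) - Real.sqrt (u / a)) +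
          (Real.sqrt (v / a) - Real.sqrt (u / a))) := by
        rw [ENNReal.ofReal_add (by linarith) (by linarith)]
    _ ≤ ENNReal.ofReal (4 * Real.sqrt α) := ENNReal.ofReal_le_ofReal (by linarith)

private lemma slice_bound (a b c y α : ℝ) (ha : 1 ≤ a) (hα : 0 < α) :
    volume {x : ℝ | |a * x ^ 2 + b * y ^ 2 + c * x * y| ≤ α} ≤
      ENNReal.ofReal (4 * Real.sqrt α) := by
  have ha0 : 0 < a := lt_of_lt_of_le one_pos ha
  have hane : a ≠ 0 := ne_of_gt ha0
  have hset : {x : ℝ | |a * x ^ 2 + b * y ^ 2 + c * x * y| ≤ α} =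
      (fun x => x + c * y / (2 * a)) ⁻¹'
        {z : ℝ | |a * z ^ 2 - (c ^ 2 * y ^ 2 / (4 * a) - b * y ^ 2)| ≤ α} := by
    ext x
    simp only [Set.mem_setOf_eq, Set.mem_preimage]
    have heq : a * (x + c * y / (2 * a)) ^ 2 - (c ^ 2 * y ^ 2 / (4 * a) - b * y ^ 2) =
        a * x ^ 2 + b * y ^ 2 + c * x * y := by
      field_simp
      ring
    rw [heq]
  rw [hset, measure_preimage_add_right]
  exact core_bound a _ α ha hα

open MeasureTheory in
theorem stmt15 : ∃ K : ℝ, 0 < K ∧ ∀ (a b c r : ℝ) (R : Set (ℝ × ℝ)) (α : ℝ),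
    1 ≤ a → a * b ≠ 0 → Convex ℝ R → (∀ x ∈ R, |x.1| ≤ r ∧ |x.2| ≤ r) → 0 < α →
    volume {x ∈ R | |a * x.1 ^ 2 + b * x.2 ^ 2 + c * x.1 * x.2| ≤ α} ≤
      ENNReal.ofReal (K * r * Real.sqrt α) := by
  refine ⟨8, by norm_num, ?_⟩
  intro a b c r R α ha hab hconv hbound hα
  set T : Set (ℝ × ℝ) :=
    {x : ℝ × ℝ | |a * x.1 ^ 2 + b * x.2 ^ 2 + c * x.1 * x.2| ≤ α} ∩
      Set.univ ×ˢ Set.Icc (-r) r with hTdef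
  have hfc : Continuous fun x : ℝ × ℝ => |a * x.1 ^ 2 + b * x.2 ^ 2 + c * x.1 * x.2| := by
    fun_prop
  have hT : MeasurableSet T :=
    ((isClosed_le hfc continuous_const).measurableSet).inter
      (MeasurableSet.univ.prod measurableSet_Icc)
  have hST : {x ∈ R | |a * x.1 ^ 2 + b * x.2 ^ 2 + c * x.1 * x.2| ≤ α} ⊆ T := by
    intro x hx
    refine ⟨hx.2, Set.mem_univ _, ?_⟩
    have := (hbound x hx.1).2
    rw [abs_le] at this
    exact this
  calc volume {x ∈ R | |a * x.1 ^ 2 + b * x.2 ^ 2 + c * x.1 * x.2| ≤ α}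
      ≤ volume T := measure_mono hST
    _ = ∫⁻ y, volume ((fun x => (x, y)) ⁻¹' T) := by
        rw [Measure.volume_eq_prod, Measure.prod_apply_symm hT]
    _ ≤ ∫⁻ y, (Set.Icc (-r) r).indicator
          (fun _ => ENNReal.ofReal (4 * Real.sqrt α)) y := by
        apply lintegral_mono
        intro y
        show volume ((fun x => (x, y)) ⁻¹' T) ≤ _
        by_cases hy : y ∈ Set.Icc (-r) r
        · rw [Set.indicator_of_mem hy]
          have hsub : (fun x => (x, y)) ⁻¹' T ⊆
              {x : ℝ | |a * x ^ 2 + b * y ^ 2 + c * x * y| ≤ α} := by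
            intro x hx
            exact hx.1
          exact le_trans (measure_mono hsub) (slice_bound a b c y α ha hα)
        · rw [Set.indicator_of_notMem hy]
          have : (fun x => (x, y)) ⁻¹' T = ∅ := by
            ext x
            simp only [Set.mem_preimage, Set.mem_empty_iff_false, iff_false]
            intro hx
            exact hy hx.2.2
          rw [this, measure_empty]
    _ = ENNReal.ofReal (4 * Real.sqrt α) * volume (Set.Icc (-r) r) := by
        rw [lintegral_indicator_const measurableSet_Icc]
    _ = ENNReal.ofReal (4 * Real.sqrt α) * ENNReal.ofReal (r - -r) := by
        rw [Real.volume_Icc]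
    _ ≤ ENNReal.ofReal (8 * r * Real.sqrt α) := by
        rw [← ENNReal.ofReal_mul (by positivity)]
        exact ENNReal.ofReal_le_ofReal (le_of_eq (by ring))
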